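/- Let X be a two-dimensional real polyhedral Banach space, i.e., a two-dimensional real normed space whose closed unit ball has only finitely many extreme points. Let x be an extreme point of the closed unit ball of X, and suppose v_1, v_2 are unit vectors such that the normal cone K = {α v_1 + β v_2 : α, β ≥ 0} satisfies x^⊥ = K ∪ (−K). Then for every extreme point y of the closed unit ball with y ≠ x and y ≠ −x, and for every t ∈ (0,1), the vector (1−t) v_1 + t v_2 does not belong to y^⊥; that is, y is not Birkhoff–James orthogonal to (1−t) v_1 + t v_2. -/

import Mathlib

/-- Birkhoff–James orthogonality: `x ⊥_B y` iff `‖x + λ y‖ ≥ ‖x‖` for all real `λ`. -/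
def BJOrth {E : Type*} [NormedAddCommGroup E] [NormedSpace ℝ E] (x y : E) : Prop :=
  ∀ lam : ℝ, ‖x‖ ≤ ‖x + lam • y‖

/-- A normal cone: `K + K ⊆ K`, `αK ⊆ K` for all `α ≥ 0`, and `K ∩ (−K) = {0}`. -/
def IsNormalCone {X : Type*} [NormedAddCommGroup X] [NormedSpace ℝ X] (K : Set X) : Prop :=
  (∀ x ∈ K, ∀ y ∈ K, x + y ∈ K) ∧ (∀ a : ℝ, 0 ≤ a → ∀ x ∈ K, a • x ∈ K) ∧
    K ∩ (-K) = {0}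

open Module Set Metric

section auxlemmas
variable {X : Type*} [NormedAddCommGroup X] [NormedSpace ℝ X]

lemma bj_smul_ne {x w : X} (hx : ‖x‖ = 1) (hB : BJOrth x w) (a : ℝ) : a • w ≠ x := by
  intro h
  have h2 := hB (-a)
  rw [show x + (-a) • w = x - a • w by module, h, sub_self, norm_zero, hx] at h2
  linarith

lemma bj_of_functional {x w : X} (f : X →ₗ[ℝ] ℝ) (hfx : f x = ‖x‖) (hfw : f w = 0)
    (hf : ∀ u, |f u| ≤ ‖u‖) : BJOrth x w := fun lam => by
  calc ‖x‖ = f (x + lam • w) := by simp [map_add, map_smul, hfw, hfx]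
  _ ≤ |f (x + lam • w)| := le_abs_self _
  _ ≤ ‖x + lam • w‖ := hf _

lemma exists_functional (hX : finrank ℝ X = 2) {x w : X} (hx : ‖x‖ = 1) (hw : w ≠ 0)
    (hB : BJOrth x w) :
    ∃ f : X →ₗ[ℝ] ℝ, f x = 1 ∧ f w = 0 ∧ (∀ u, |f u| ≤ ‖u‖) ∧
      (∀ z : X, f z = 0 → ∃ c : ℝ, z = c • w) := by
  have hind : LinearIndependent ℝ ![x, w] := by
    rw [linearIndependent_fin2]
    refine ⟨by simpa using hw, fun a => by simpa using bj_smul_ne hx hB a⟩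
  let B : Basis (Fin 2) ℝ X := basisOfLinearIndependentOfCardEqFinrank hind (by simp [hX])
  have hBc : ⇑B = ![x, w] := coe_basisOfLinearIndependentOfCardEqFinrank hind _
  have hB0 : B 0 = x := by rw [hBc]; rfl
  have hB1 : B 1 = w := by rw [hBc]; rfl
  have hrepr : ∀ u : X, u = B.repr u 0 • x + B.repr u 1 • w := by
    intro u
    conv_lhs => rw [← B.sum_repr u]
    rw [Fin.sum_univ_two, hB0, hB1]
  refine ⟨B.coord 0, ?_, ?_, ?_, ?_⟩
  · rw [← hB0, Basis.coord_apply, B.repr_self]; simp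
  · rw [← hB1, Basis.coord_apply, B.repr_self]; simp
  · intro u
    rw [Basis.coord_apply]
    rcases eq_or_ne (B.repr u 0) 0 with h | h
    · simp [h]
    · set a := B.repr u 0
      set b := B.repr u 1
      have h1 : (1:ℝ) ≤ ‖x + (b / a) • w‖ := by
        have := hB (b / a); rwa [hx] at this
      have h2 : ‖u‖ = |a| * ‖x + (b / a) • w‖ := by
        conv_lhs => rw [hrepr u]
        rw [show a • x + b • w = a • (x + (b/a) • w) by
          rw [smul_add, smul_smul, mul_div_cancel₀ b h]]
        rw [norm_smul, Real.norm_eq_abs]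
      have h3 : 0 ≤ |a| := abs_nonneg a
      nlinarith
  · intro z hz
    refine ⟨B.repr z 1, ?_⟩
    have := hrepr z
    rw [Basis.coord_apply] at hz
    rw [hz] at this
    simpa using this

lemma extremePoint_norm_one [Nontrivial X] {e : X}
    (he : e ∈ Set.extremePoints ℝ (closedBall (0:X) 1)) : ‖e‖ = 1 := by
  obtain ⟨he1, hext⟩ := he
  have hle : ‖e‖ ≤ 1 := by rwa [mem_closedBall_zero_iff] at he1
  by_contra hne
  have hlt : ‖e‖ < 1 := lt_of_le_of_ne hle hne
  obtain ⟨u, hu⟩ := exists_ne (0 : X)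
  set z : X := ((1 - ‖e‖) / ‖u‖) • u with hz_def
  have hzn : ‖z‖ = 1 - ‖e‖ := by
    rw [hz_def, norm_smul, Real.norm_eq_abs,
      abs_of_pos (div_pos (by linarith) (norm_pos_iff.2 hu)),
      div_mul_cancel₀ _ (norm_ne_zero_iff.2 hu)]
  have hz0 : z ≠ 0 := by
    intro h; rw [h, norm_zero] at hzn; linarith
  have h1 : e + z ∈ closedBall (0:X) 1 := by
    rw [mem_closedBall_zero_iff]
    calc ‖e + z‖ ≤ ‖e‖ + ‖z‖ := norm_add_le _ _
    _ = 1 := by rw [hzn]; ring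
  have h2 : e - z ∈ closedBall (0:X) 1 := by
    rw [mem_closedBall_zero_iff]
    calc ‖e - z‖ ≤ ‖e‖ + ‖z‖ := norm_sub_le _ _
    _ = 1 := by rw [hzn]; ring
  have hseg : e ∈ openSegment ℝ (e + z) (e - z) :=
    ⟨1/2, 1/2, by norm_num, by norm_num, by norm_num, by module⟩
  have h3 := (hext h1 h2 hseg)
  apply hz0
  have h4 : e + z = e := h3
  linear_combination (norm := module) h4

lemma neg_extremePoint {e : X} (he : e ∈ Set.extremePoints ℝ (closedBall (0:X) 1)) :
    -e ∈ Set.extremePoints ℝ (closedBall (0:X) 1) := by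
  obtain ⟨he1, hext⟩ := he
  rw [mem_closedBall_zero_iff] at he1
  refine ⟨by rwa [mem_closedBall_zero_iff, norm_neg], ?_⟩
  intro x₁ hx₁ x₂ hx₂ hseg
  obtain ⟨a, b, ha, hb, hab, habe⟩ := hseg
  rw [mem_closedBall_zero_iff] at hx₁ hx₂
  have hseg' : e ∈ openSegment ℝ (-x₁) (-x₂) :=
    ⟨a, b, ha, hb, hab, by linear_combination (norm := module) -habe⟩
  have h := hext (x₁ := -x₁) (x₂ := -x₂) (by rwa [mem_closedBall_zero_iff, norm_neg])
    (by rwa [mem_closedBall_zero_iff, norm_neg]) hseg'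
  linear_combination (norm := module) -h

lemma ball_eq_hull [FiniteDimensional ℝ X]
    (hpoly : (Set.extremePoints ℝ (closedBall (0 : X) 1)).Finite) :
    closedBall (0:X) 1 = convexHull ℝ (Set.extremePoints ℝ (closedBall (0 : X) 1)) := by
  have h := closure_convexHull_extremePoints (isCompact_closedBall (0:X) 1)
    (convex_closedBall (0:X) 1)
  rw [IsClosed.closure_eq (hpoly.isCompact_convexHull ℝ).isClosed] at h
  exact h.symm

lemma L1core {E : Set X} {x : X} (hx1 : ‖x‖ = 1)
    (hconv : closedBall (0:X) 1 = convexHull ℝ E)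
    (hEsym : ∀ e ∈ E, -e ∈ E) (hEball : E ⊆ closedBall (0:X) 1)
    (g : X →L[ℝ] ℝ) (hgx : g x = 1) (hgle : ∀ u, |g u| ≤ ‖u‖)
    {v₀ : X} (hgv₀ : g v₀ = 0)
    (gp : X →ₗ[ℝ] ℝ) (hgpx : gp x = 0) (hgpv₀ : gp v₀ = 1)
    (hker : ∀ z : X, g z = 0 → z = gp z • v₀)
    (hsign : ∀ e ∈ E, g e = 1 → 0 ≤ gp e) (hEfin : E.Finite) :
    ∃ u : X, BJOrth x u ∧ ¬ ∃ c : ℝ, u = c • v₀ := by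
  classical
  set T : Finset X := hEfin.toFinset.filter (fun e => g e ≠ 1) with hT_def
  have hTlt : ∀ e ∈ T, g e < 1 := by
    intro e he
    rw [hT_def, Finset.mem_filter, Set.Finite.mem_toFinset] at he
    have h1 : |g e| ≤ 1 := by
      have h2 := hEball he.1
      rw [mem_closedBall_zero_iff] at h2
      linarith [hgle e]
    exact lt_of_le_of_ne (le_of_abs_le h1) he.2
  set ε : ℝ := if hT : T.Nonempty then
      min 1 (T.inf' hT fun e => (1 - g e) / (|gp e| + 1)) else 1 with hε_def
  have hε0 : 0 < ε := by
    rw [hε_def]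
    split_ifs with hT
    · refine lt_min one_pos ?_
      rw [Finset.lt_inf'_iff]
      intro e he
      have := hTlt e he
      exact div_pos (by linarith) (by positivity)
    · exact one_pos
  have hεT : ∀ e ∈ T, ε * (|gp e| + 1) ≤ 1 - g e := by
    intro e he
    have hne : T.Nonempty := ⟨e, he⟩
    have h1 : ε ≤ (1 - g e) / (|gp e| + 1) := by
      rw [hε_def, dif_pos hne]
      exact le_trans (min_le_right _ _) (Finset.inf'_le _ he)
    have h2 : (0:ℝ) < |gp e| + 1 := by positivity
    calc ε * (|gp e| + 1) ≤ ((1 - g e) / (|gp e| + 1)) * (|gp e| + 1) :=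
          mul_le_mul_of_nonneg_right h1 (le_of_lt h2)
    _ = 1 - g e := div_mul_cancel₀ _ (ne_of_gt h2)
  set fE : X →ₗ[ℝ] ℝ := (g : X →ₗ[ℝ] ℝ) - ε • gp with hfE_def
  have hfE : ∀ u : X, fE u = g u - ε * gp u := by intro u; simp [hfE_def]
  have hfEx : fE x = 1 := by rw [hfE, hgx, hgpx]; ring
  have hEbound : ∀ e ∈ E, fE e ≤ 1 := by
    intro e he
    by_cases hge : g e = 1
    · have h4 : 0 ≤ gp e := hsign e he hge
      rw [hfE, hge]
      nlinarith
    · have heT : e ∈ T := by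
        rw [hT_def, Finset.mem_filter, Set.Finite.mem_toFinset]
        exact ⟨he, hge⟩
      have h1 := hεT e heT
      have h2 : ε * gp e ≥ -(ε * (|gp e| + 1)) := by
        have h3 : -(|gp e| + 1) ≤ gp e := by
          have := neg_abs_le (gp e); linarith
        nlinarith
      rw [hfE]
      linarith
  have hEbound2 : ∀ e ∈ E, fE e ∈ Set.Icc (-1:ℝ) 1 := by
    intro e he
    refine ⟨?_, hEbound e he⟩
    have := hEbound (-e) (hEsym e he)
    rw [map_neg] at this
    linarith
  have hball : ∀ u ∈ closedBall (0:X) 1, |fE u| ≤ 1 := by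
    intro u hu
    rw [hconv] at hu
    have hsub : convexHull ℝ E ⊆ fE ⁻¹' (Set.Icc (-1:ℝ) 1) :=
      convexHull_min (fun e he => hEbound2 e he) ((convex_Icc _ _).linear_preimage fE)
    have := hsub hu
    rw [Set.mem_preimage, Set.mem_Icc] at this
    exact abs_le.2 this
  have hle : ∀ u : X, |fE u| ≤ ‖u‖ := by
    intro u
    rcases eq_or_ne u 0 with rfl | hu
    · simp
    · have h1 : (‖u‖⁻¹ • u) ∈ closedBall (0:X) 1 := by
        rw [mem_closedBall_zero_iff, norm_smul, Real.norm_eq_abs,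
          abs_of_pos (inv_pos.2 (norm_pos_iff.2 hu)), inv_mul_cancel₀ (norm_ne_zero_iff.2 hu)]
      have h2 := hball _ h1
      rw [map_smul] at h2
      have h3 : |‖u‖⁻¹ * fE u| = ‖u‖⁻¹ * |fE u| := by
        rw [abs_mul, abs_of_pos (inv_pos.2 (norm_pos_iff.2 hu))]
      rw [smul_eq_mul, h3] at h2
      have h4 : 0 < ‖u‖ := norm_pos_iff.2 hu
      calc |fE u| = ‖u‖ * (‖u‖⁻¹ * |fE u|) := by field_simp
      _ ≤ ‖u‖ * 1 := by nlinarith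
      _ = ‖u‖ := mul_one _
  refine ⟨v₀ + ε • x, ?_, ?_⟩
  · refine bj_of_functional fE (by rw [hfEx, hx1]) ?_ hle
    rw [map_add, map_smul, hfEx, hfE, hgv₀, hgpv₀, smul_eq_mul]
    ring
  · rintro ⟨c, hc⟩
    have h1 : g (v₀ + ε • x) = ε := by rw [map_add, map_smul, hgv₀, hgx, smul_eq_mul]; ring
    have h2 : g (c • v₀) = 0 := by rw [map_smul, hgv₀, smul_eq_mul]; ring
    rw [hc, h2] at h1
    exact absurd h1.symm (ne_of_gt hε0)

lemma no_line_orth (hX : finrank ℝ X = 2)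
    (hpoly : (Set.extremePoints ℝ (closedBall (0 : X) 1)).Finite)
    {x v : X} (hx : x ∈ Set.extremePoints ℝ (closedBall (0 : X) 1))
    (horth : ∀ z : X, BJOrth x z → ∃ c : ℝ, z = c • v) : False := by
  haveI : FiniteDimensional ℝ X := FiniteDimensional.of_finrank_pos (by rw [hX]; norm_num)
  haveI : Nontrivial X := Module.nontrivial_of_finrank_pos (R := ℝ) (by rw [hX]; norm_num)
  have hx1 : ‖x‖ = 1 := extremePoint_norm_one hx
  have hx0 : x ≠ 0 := by intro h; rw [h, norm_zero] at hx1; linarith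
  obtain ⟨g, hg1, hgx'⟩ := exists_dual_vector ℝ x (norm_ne_zero_iff.2 hx0)
  rw [hx1] at hgx'
  have hgx : g x = 1 := by exact_mod_cast hgx'
  clear hgx'
  have hgle : ∀ u : X, |g u| ≤ ‖u‖ := by
    intro u
    calc |g u| = ‖g u‖ := (Real.norm_eq_abs _).symm
    _ ≤ ‖g‖ * ‖u‖ := g.le_opNorm u
    _ = ‖u‖ := by rw [hg1, one_mul]
  have hni : ¬ Function.Injective g := by
    intro hinj
    have h2 : Function.Injective (g : X →ₗ[ℝ] ℝ) := hinj
    have := LinearMap.finrank_le_finrank_of_injective h2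
    rw [hX, finrank_self] at this
    omega
  rw [Function.not_injective_iff] at hni
  obtain ⟨p, q, hpq, hne⟩ := hni
  set v₀ : X := p - q with hv₀_def
  have hgv₀ : g v₀ = 0 := by rw [hv₀_def, map_sub, hpq, sub_self]
  have hv₀0 : v₀ ≠ 0 := sub_ne_zero.2 hne
  have hind : LinearIndependent ℝ ![x, v₀] := by
    rw [linearIndependent_fin2]
    refine ⟨by simpa using hv₀0, fun a h => ?_⟩
    simp only [Matrix.cons_val_one, Matrix.head_cons, Matrix.cons_val_zero] at h
    have h2 : g (a • v₀) = g x := by rw [h]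
    rw [map_smul, hgv₀, smul_eq_mul, mul_zero, hgx] at h2
    linarith
  let B : Basis (Fin 2) ℝ X := basisOfLinearIndependentOfCardEqFinrank hind (by simp [hX])
  have hBc : ⇑B = ![x, v₀] := coe_basisOfLinearIndependentOfCardEqFinrank hind _
  have hB0 : B 0 = x := by rw [hBc]; rfl
  have hB1 : B 1 = v₀ := by rw [hBc]; rfl
  set gp : X →ₗ[ℝ] ℝ := B.coord 1 with hgp_def
  have hgpx : gp x = 0 := by rw [hgp_def, ← hB0, Basis.coord_apply, B.repr_self]; simp
  have hgpv₀ : gp v₀ = 1 := by rw [hgp_def, ← hB1, Basis.coord_apply, B.repr_self]; simp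
  have hrepr : ∀ u : X, u = B.repr u 0 • x + B.repr u 1 • v₀ := by
    intro u
    conv_lhs => rw [← B.sum_repr u]
    rw [Fin.sum_univ_two, hB0, hB1]
  have hker : ∀ z : X, g z = 0 → z = gp z • v₀ := by
    intro z hz
    have h1 := hrepr z
    have h2 : g z = B.repr z 0 := by
      conv_lhs => rw [h1]
      rw [map_add, map_smul, map_smul, hgx, hgv₀, smul_eq_mul, smul_eq_mul]
      ring
    rw [hz] at h2
    rw [hgp_def, Basis.coord_apply]
    conv_lhs => rw [h1, ← h2]
    simp
  set E : Set X := Set.extremePoints ℝ (closedBall (0:X) 1) with hE_def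
  have hEsym : ∀ e ∈ E, -e ∈ E := fun e he => neg_extremePoint he
  have hEball : E ⊆ closedBall (0:X) 1 := extremePoints_subset
  have hconv : closedBall (0:X) 1 = convexHull ℝ E := ball_eq_hull hpoly
  have hopp : ∀ e₁ ∈ E, ∀ e₂ ∈ E, g e₁ = 1 → g e₂ = 1 → 0 < gp e₁ → gp e₂ < 0 → False := by
    intro e₁ he₁ e₂ he₂ hge₁ hge₂ hgpe₁ hgpe₂
    set a := gp e₁
    set b := gp e₂
    have he₁x : e₁ = x + a • v₀ := by
      have h1 : g (e₁ - x) = 0 := by rw [map_sub, hge₁, hgx, sub_self]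
      have h2 := hker _ h1
      have h3 : gp (e₁ - x) = a := by rw [map_sub, hgpx]; simp; rfl
      rw [h3] at h2
      linear_combination (norm := module) h2
    have he₂x : e₂ = x + b • v₀ := by
      have h1 : g (e₂ - x) = 0 := by rw [map_sub, hge₂, hgx, sub_self]
      have h2 := hker _ h1
      have h3 : gp (e₂ - x) = b := by rw [map_sub, hgpx]; simp; rfl
      rw [h3] at h2
      linear_combination (norm := module) h2
    have hs : (0:ℝ) < a - b := by linarith
    have hseg : x ∈ openSegment ℝ e₁ e₂ := by
      refine ⟨-b / (a - b), a / (a - b), div_pos (by linarith) hs, div_pos (by linarith) hs,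
        ?_, ?_⟩
      · field_simp
        ring
      · rw [he₁x, he₂x]
        match_scalars <;> field_simp <;> ring
    have h := (hx.2 (hEball he₁) (hEball he₂) hseg)
    rw [he₁x] at h
    have h5 : a • v₀ = 0 := by linear_combination (norm := module) h
    rcases smul_eq_zero.1 h5 with h' | h'
    · linarith
    · exact hv₀0 h'
  have hfinal : ∃ u : X, BJOrth x u ∧ ¬ ∃ c : ℝ, u = c • v₀ := by
    by_cases hP : ∀ e ∈ E, g e = 1 → 0 ≤ gp e
    · exact L1core hx1 hconv hEsym hEball g hgx hgle hgv₀ gp hgpx hgpv₀ hker hP hpoly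
    · push_neg at hP
      obtain ⟨e₂, he₂, hge₂, hgpe₂⟩ := hP
      have hsign' : ∀ e ∈ E, g e = 1 → 0 ≤ (-gp) e := by
        intro e he hge
        simp only [LinearMap.neg_apply, neg_nonneg]
        by_contra hlt
        push_neg at hlt
        exact hopp e he e₂ he₂ hge hge₂ hlt hgpe₂
      have hker' : ∀ z : X, g z = 0 → z = (-gp) z • (-v₀) := by
        intro z hz
        have := hker z hz
        simp only [LinearMap.neg_apply, neg_smul, smul_neg, neg_neg]
        exact this
      obtain ⟨u, hu1, hu2⟩ := L1core hx1 hconv hEsym hEball g hgx hgle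
        (v₀ := -v₀) (by rw [map_neg, hgv₀, neg_zero]) (-gp)
        (by simp [hgpx]) (by simp [hgpv₀]) hker' hsign' hpoly
      refine ⟨u, hu1, ?_⟩
      rintro ⟨c, hc⟩
      exact hu2 ⟨-c, by rw [hc]; module⟩
  obtain ⟨u, hu1, hu2⟩ := hfinal
  obtain ⟨c₁, hc₁⟩ := horth u hu1
  have hbjv₀ : BJOrth x v₀ :=
    bj_of_functional (g : X →ₗ[ℝ] ℝ) (by simpa [hx1] using hgx) hgv₀ hgle
  obtain ⟨c₀, hc₀⟩ := horth v₀ hbjv₀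
  have hc₀0 : c₀ ≠ 0 := by
    rintro rfl
    rw [zero_smul] at hc₀
    exact hv₀0 hc₀
  refine hu2 ⟨c₁ / c₀, ?_⟩
  rw [hc₁, hc₀, smul_smul, div_mul_cancel₀ _ hc₀0]

end auxlemmas

set_option maxHeartbeats 2000000 in
/-- In a two-dimensional real polyhedral Banach space, if `x` is an extreme
point of the closed unit ball and `v₁, v₂` are unit vectors such that the normal cone
`K = {α v₁ + β v₂ : α, β ≥ 0}` satisfies `x^⊥ = K ∪ (−K)`, then no extreme point
`y ≠ ±x` is Birkhoff–James orthogonal to `(1−t) v₁ + t v₂` for any `t ∈ (0,1)`. -/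
theorem stmt7 {X : Type*} [NormedAddCommGroup X] [NormedSpace ℝ X] [CompleteSpace X]
    (hX : Module.finrank ℝ X = 2)
    (hpoly : (Set.extremePoints ℝ (Metric.closedBall (0 : X) 1)).Finite)
    (x : X) (hx : x ∈ Set.extremePoints ℝ (Metric.closedBall (0 : X) 1))
    (v₁ v₂ : X) (hv₁ : ‖v₁‖ = 1) (hv₂ : ‖v₂‖ = 1)
    (hcone : IsNormalCone {z : X | ∃ a b : ℝ, 0 ≤ a ∧ 0 ≤ b ∧ z = a • v₁ + b • v₂})
    (horth : {y : X | BJOrth x y} =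
      {z : X | ∃ a b : ℝ, 0 ≤ a ∧ 0 ≤ b ∧ z = a • v₁ + b • v₂} ∪
      (-{z : X | ∃ a b : ℝ, 0 ≤ a ∧ 0 ≤ b ∧ z = a • v₁ + b • v₂})) :
    ∀ y ∈ Set.extremePoints ℝ (Metric.closedBall (0 : X) 1), y ≠ x → y ≠ -x →
      ∀ t : ℝ, t ∈ Set.Ioo (0 : ℝ) 1 → ¬ BJOrth y ((1 - t) • v₁ + t • v₂) := by
  intro y hy hyx hynx t ht hB
  haveI : FiniteDimensional ℝ X := FiniteDimensional.of_finrank_pos (by rw [hX]; norm_num)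
  haveI : Nontrivial X := Module.nontrivial_of_finrank_pos (R := ℝ) (by rw [hX]; norm_num)
  obtain ⟨ht0, ht1⟩ := ht
  set K : Set X := {z : X | ∃ a b : ℝ, 0 ≤ a ∧ 0 ≤ b ∧ z = a • v₁ + b • v₂} with hK_def
  have hmem : ∀ z : X, BJOrth x z ↔ (z ∈ K ∨ z ∈ -K) := by
    intro z
    have := Set.ext_iff.1 horth z
    rw [Set.mem_union] at this
    exact this
  have hx1 : ‖x‖ = 1 := extremePoint_norm_one hx
  have hy1 : ‖y‖ = 1 := extremePoint_norm_one hy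
  have hv₂0 : v₂ ≠ 0 := by intro h; rw [h, norm_zero] at hv₂; linarith
  have hv₁0 : v₁ ≠ 0 := by intro h; rw [h, norm_zero] at hv₁; linarith
  -- rule out linear dependence of v₁, v₂
  by_cases hdep : ∃ a : ℝ, a • v₂ = v₁
  · obtain ⟨a, ha⟩ := hdep
    have ha1 : |a| = 1 := by
      have h1 := congrArg norm ha
      rw [norm_smul, hv₂, hv₁, mul_one, Real.norm_eq_abs] at h1
      exact h1
    rcases abs_eq (le_of_lt one_pos) |>.1 ha1 with ha' | ha'
    · -- a = 1 : v₁ = v₂, so x^⊥ ⊆ ℝ v₂, contradiction with polyhedrality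
      subst ha'
      rw [one_smul] at ha
      refine no_line_orth hX hpoly hx (v := v₂) ?_
      intro z hz
      rcases (hmem z).1 hz with hzK | hzK
      · obtain ⟨p, q, hp, hq, hz'⟩ := hzK
        exact ⟨p + q, by rw [hz', ← ha]; module⟩
      · rw [Set.mem_neg] at hzK
        obtain ⟨p, q, hp, hq, hz'⟩ := hzK
        exact ⟨-(p + q), by
          have : z = -(p • v₁ + q • v₂) := by linear_combination (norm := module) -hz'
          rw [this, ← ha]; module⟩
    · -- a = -1 : v₁ = -v₂, contradicts K ∩ (-K) = {0}
      subst ha'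
      have hv₁v₂ : v₁ = -v₂ := by rw [← ha]; module
      have h1 : v₂ ∈ K := ⟨0, 1, le_refl 0, zero_le_one, by module⟩
      have h2 : v₂ ∈ -K := by
        rw [Set.mem_neg]
        exact ⟨1, 0, zero_le_one, le_refl 0, by rw [hv₁v₂]; module⟩
      have h3 : v₂ ∈ K ∩ (-K) := ⟨h1, h2⟩
      rw [hcone.2.2] at h3
      exact hv₂0 h3
  push_neg at hdep
  have hind : LinearIndependent ℝ ![v₁, v₂] := by
    rw [linearIndependent_fin2]
    exact ⟨by simpa using hv₂0, fun a => by simpa using hdep a⟩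
  set w : X := (1 - t) • v₁ + t • v₂ with hw_def
  have h1t : (1:ℝ) - t ≠ 0 := by intro h; linarith
  have hw0 : w ≠ 0 := by
    intro h
    apply hdep (-(t / (1 - t)))
    have h3 : (1 - t) • v₁ = -(t • v₂) := by linear_combination (norm := module) h
    calc (-(t / (1 - t))) • v₂ = (1 - t)⁻¹ • (-(t • v₂)) := by
          rw [smul_neg, smul_smul, ← neg_smul]
          congr 1
          field_simp
    _ = (1 - t)⁻¹ • ((1 - t) • v₁) := by rw [h3]
    _ = v₁ := by rw [smul_smul, inv_mul_cancel₀ h1t, one_smul]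
  have hwK : w ∈ K := ⟨1 - t, t, by linarith, le_of_lt ht0, rfl⟩
  have hv₁K : v₁ ∈ K := ⟨1, 0, zero_le_one, le_refl 0, by module⟩
  have hv₂K : v₂ ∈ K := ⟨0, 1, le_refl 0, zero_le_one, by module⟩
  have hbjw : BJOrth x w := (hmem w).2 (Or.inl hwK)
  have hbjv₁ : BJOrth x v₁ := (hmem v₁).2 (Or.inl hv₁K)
  have hbjv₂ : BJOrth x v₂ := (hmem v₂).2 (Or.inl hv₂K)
  obtain ⟨f, hfx, hfw, hfle, hfker⟩ := exists_functional hX hx1 hw0 hbjw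
  obtain ⟨h, hhy, hhw, hhle, _⟩ := exists_functional hX hy1 hw0 hB
  -- y = (f y) • x + c • w
  obtain ⟨c₁, hc₁⟩ : ∃ c : ℝ, y - (f y) • x = c • w := by
    apply hfker
    rw [map_sub, map_smul, hfx, smul_eq_mul, mul_one, sub_self]
  have hyrepr : y = (f y) • x + c₁ • w := by linear_combination (norm := module) hc₁
  have hhxfy : f y * h x = 1 := by
    have h1 : h y = f y * h x + c₁ * h w := by
      conv_lhs => rw [hyrepr]
      rw [map_add, map_smul, map_smul, smul_eq_mul, smul_eq_mul]
    rw [hhy, hhw, mul_zero, add_zero] at h1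
    linarith
  have hfy1 : |f y| = 1 := by
    have h1 : |f y| ≤ 1 := by rw [← hy1]; exact hfle y
    have h2 : |h x| ≤ 1 := by rw [← hx1]; exact hhle x
    have h3 : |f y| * |h x| = 1 := by rw [← abs_mul, hhxfy, abs_one]
    nlinarith [abs_nonneg (f y), abs_nonneg (h x)]
  -- normalize sign: y' with f y' = 1, ‖y'‖ = 1, y' ≠ x
  obtain ⟨y', hy'1, hfy', hy'x⟩ : ∃ y' : X, ‖y'‖ = 1 ∧ f y' = 1 ∧ y' ≠ x := by
    rcases abs_eq (le_of_lt one_pos) |>.1 hfy1 with hσ | hσ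
    · exact ⟨y, hy1, hσ, hyx⟩
    · refine ⟨-y, by rw [norm_neg, hy1], by rw [map_neg, hσ, neg_neg], ?_⟩
      intro hh
      apply hynx
      linear_combination (norm := module) -hh
  obtain ⟨c, hc⟩ : ∃ c : ℝ, y' - x = c • w := by
    apply hfker
    rw [map_sub, hfy', hfx, sub_self]
  have hy'x2 : y' = x + c • w := by linear_combination (norm := module) hc
  have hc0 : c ≠ 0 := by
    rintro rfl
    rw [zero_smul, add_zero] at hy'x2
    exact hy'x hy'x2
  -- functionals at x killing v₁ resp. v₂
  obtain ⟨f₁, hf₁x, hf₁v₁, hf₁le, _⟩ := exists_functional hX hx1 hv₁0 hbjv₁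
  obtain ⟨f₂, hf₂x, hf₂v₂, hf₂le, _⟩ := exists_functional hX hx1 hv₂0 hbjv₂
  -- coordinates of x in basis (v₁, v₂)
  let B : Basis (Fin 2) ℝ X := basisOfLinearIndependentOfCardEqFinrank hind (by simp [hX])
  have hBc : ⇑B = ![v₁, v₂] := coe_basisOfLinearIndependentOfCardEqFinrank hind _
  have hB0 : B 0 = v₁ := by rw [hBc]; rfl
  have hB1 : B 1 = v₂ := by rw [hBc]; rfl
  set p : ℝ := B.repr x 0 with hp_def
  set q : ℝ := B.repr x 1 with hq_def
  have hxrepr : x = p • v₁ + q • v₂ := by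
    conv_lhs => rw [← B.sum_repr x]
    rw [Fin.sum_univ_two, hB0, hB1]
  have hq1 : q * f₁ v₂ = 1 := by
    have h1 : f₁ x = p * f₁ v₁ + q * f₁ v₂ := by
      conv_lhs => rw [hxrepr]
      rw [map_add, map_smul, map_smul, smul_eq_mul, smul_eq_mul]
    rw [hf₁x, hf₁v₁, mul_zero, zero_add] at h1
    linarith
  have hp1 : p * f₂ v₁ = 1 := by
    have h1 : f₂ x = p * f₂ v₁ + q * f₂ v₂ := by
      conv_lhs => rw [hxrepr]
      rw [map_add, map_smul, map_smul, smul_eq_mul, smul_eq_mul]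
    rw [hf₂x, hf₂v₂, mul_zero, add_zero] at h1
    linarith
  -- the two sign inequalities
  have hs1 : c * f₁ v₂ ≤ 0 := by
    have h1 : f₁ y' ≤ 1 := by
      have := hf₁le y'
      rw [hy'1] at this
      exact le_of_abs_le this
    have h2 : f₁ y' = 1 + c * (t * f₁ v₂) := by
      conv_lhs => rw [hy'x2]
      rw [map_add, map_smul, hf₁x, smul_eq_mul, hw_def, map_add, map_smul, map_smul,
        hf₁v₁, smul_eq_mul, smul_eq_mul, mul_zero, zero_add]
    have h3 : c * (t * f₁ v₂) ≤ 0 := by linarith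
    nlinarith
  have hs2 : c * f₂ v₁ ≤ 0 := by
    have h1 : f₂ y' ≤ 1 := by
      have := hf₂le y'
      rw [hy'1] at this
      exact le_of_abs_le this
    have h2 : f₂ y' = 1 + c * ((1 - t) * f₂ v₁) := by
      conv_lhs => rw [hy'x2]
      rw [map_add, map_smul, hf₂x, smul_eq_mul, hw_def, map_add, map_smul, map_smul,
        hf₂v₂, smul_eq_mul, smul_eq_mul, mul_zero, add_zero]
    have h3 : c * ((1 - t) * f₂ v₁) ≤ 0 := by linarith
    have h4 : (0:ℝ) < 1 - t := by linarith
    nlinarith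
  -- derive that x or -x lies in K, contradicting BJOrth x x
  have hxx : ¬ BJOrth x x := by
    intro hbx
    have := hbx (-1)
    rw [show x + (-1 : ℝ) • x = 0 by module, norm_zero, hx1] at this
    linarith
  rcases lt_or_gt_of_ne hc0 with hcneg | hcpos
  · -- c < 0 : p > 0, q > 0, x ∈ K
    have hq : 0 < q := by nlinarith
    have hp : 0 < p := by nlinarith
    exact hxx ((hmem x).2 (Or.inl ⟨p, q, le_of_lt hp, le_of_lt hq, hxrepr⟩))
  · -- c > 0 : p < 0, q < 0, -x ∈ K
    have hq : q < 0 := by nlinarith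
    have hp : p < 0 := by nlinarith
    refine hxx ((hmem x).2 (Or.inr ?_))
    rw [Set.mem_neg]
    exact ⟨-p, -q, by linarith, by linarith, by
      linear_combination (norm := module) -hxrepr⟩
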